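/- If G is a graph of order n with m edges and minimum degree at least k, then γ^r_{×k,t}(G) ≥ 3n/2 − m/k. -/

import Mathlib

open SimpleGraph

/-- `S` is a `k`-tuple total restrained dominating set of `G`: every vertex has at
least `k` neighbors in `S`, and every vertex outside `S` has at least `k` neighbors
outside `S`. -/
def IsKTRDS {V : Type*} (G : SimpleGraph V) (k : ℕ) (S : Set V) : Prop :=
  (∀ v : V, k ≤ (S ∩ G.neighborSet v).ncard) ∧
  (∀ v : V, v ∉ S → k ≤ (Sᶜ ∩ G.neighborSet v).ncard)

/-- `S` is a `k`-tuple total dominating set of `G`. -/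
def IsKTDS {V : Type*} (G : SimpleGraph V) (k : ℕ) (S : Set V) : Prop :=
  ∀ v : V, k ≤ (S ∩ G.neighborSet v).ncard

/-- The `k`-tuple total restrained domination number of `G`. -/
noncomputable def ktrdNum {V : Type*} (G : SimpleGraph V) (k : ℕ) : ℕ :=
  sInf {m | ∃ S : Set V, IsKTRDS G k S ∧ S.ncard = m}

/-- The `k`-tuple total domination number of `G`. -/
noncomputable def ktNum {V : Type*} (G : SimpleGraph V) (k : ℕ) : ℕ :=
  sInf {m | ∃ S : Set V, IsKTDS G k S ∧ S.ncard = m}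

/-- The `k`-tuple total restrained domatic number of `G`. -/
noncomputable def ktrdDomatic {V : Type*} (G : SimpleGraph V) (k : ℕ) : ℕ :=
  sSup {d | ∃ f : Fin d → Set V, (∀ i, IsKTRDS G k (f i)) ∧ ∀ v : V, ∃! i, v ∈ f i}

/-- The `k`-tuple total domatic number of `G`. -/
noncomputable def ktDomatic {V : Type*} (G : SimpleGraph V) (k : ℕ) : ℕ :=
  sSup {d | ∃ f : Fin d → Set V, (∀ i, IsKTDS G k (f i)) ∧ ∀ v : V, ∃! i, v ∈ f i}

theorem stmt_13 {V : Type*} [Fintype V] (G : SimpleGraph V) (k : ℕ) (hk : 1 ≤ k)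
    (hδ : ∀ v : V, k ≤ (G.neighborSet v).ncard) :
    3 * (Fintype.card V : ℝ) / 2 - (G.edgeSet.ncard : ℝ) / (k : ℝ) ≤
      (ktrdNum G k : ℝ) := by
  classical
  have hne : {m | ∃ S : Set V, IsKTRDS G k S ∧ S.ncard = m}.Nonempty := by
    refine ⟨(Set.univ : Set V).ncard, Set.univ, ⟨fun v => ?_, fun v hv => absurd (Set.mem_univ v) hv⟩, rfl⟩
    simpa using hδ v
  obtain ⟨S, hS, hcard⟩ := Nat.sInf_mem hne
  -- Finset versions
  set A : Finset V := S.toFinset with hA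
  set B : Finset V := Aᶜ with hB
  have hAcard : A.card = ktrdNum G k := by
    rw [ktrdNum, ← hcard, Set.ncard_eq_toFinset_card']
  -- condition 1, Finset form
  have h1 : ∀ v : V, k ≤ (A.filter (fun w => G.Adj v w)).card := by
    intro v
    have h := hS.1 v
    have heq : (S ∩ G.neighborSet v).ncard = (A.filter (fun w => G.Adj v w)).card := by
      rw [Set.ncard_eq_toFinset_card']
      congr 1
      ext w
      simp [hA, SimpleGraph.mem_neighborSet]
    omega
  have h2 : ∀ v ∈ B, k ≤ (B.filter (fun w => G.Adj v w)).card := by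
    intro v hv
    have hvS : v ∉ S := by
      simpa [hB, hA] using hv
    have h := hS.2 v hvS
    have heq : (Sᶜ ∩ G.neighborSet v).ncard = (B.filter (fun w => G.Adj v w)).card := by
      rw [Set.ncard_eq_toFinset_card']
      congr 1
      ext w
      simp only [hB, hA, Set.mem_toFinset, Set.mem_inter_iff, Set.mem_compl_iff,
        Finset.mem_filter, Finset.mem_compl, SimpleGraph.mem_neighborSet]
    omega
  -- indicator function
  set f : V → V → ℕ := fun v w => if G.Adj v w then 1 else 0 with hf
  have hfilt : ∀ (s : Finset V) (v : V),
      (s.filter (fun w => G.Adj v w)).card = ∑ w ∈ s, f v w := by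
    intro s v
    rw [Finset.card_filter]
  -- degree sum
  have hdeg : ∑ v : V, ∑ w : V, f v w = 2 * G.edgeSet.ncard := by
    have h1 : ∀ v : V, ∑ w : V, f v w = G.degree v := by
      intro v
      rw [← hfilt]
      have hnb : Finset.univ.filter (fun w => G.Adj v w) = G.neighborFinset v := by
        ext w; simp
      rw [hnb, SimpleGraph.degree]
    have h2 : G.edgeSet.ncard = G.edgeFinset.card := by
      rw [Set.ncard_eq_toFinset_card']
      exact congrArg Finset.card (by ext e; simp)
    rw [h2]
    rw [Finset.sum_congr rfl (fun v _ => h1 v)]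
    exact G.sum_degrees_eq_twice_card_edges
  -- symmetry of cross sums
  have hsym : ∑ v ∈ A, ∑ w ∈ B, f v w = ∑ v ∈ B, ∑ w ∈ A, f v w := by
    rw [Finset.sum_comm]
    refine Finset.sum_congr rfl fun v _ => Finset.sum_congr rfl fun w _ => ?_
    simp [hf, G.adj_comm]
  -- lower bounds
  have hT1 : Fintype.card V * k ≤ ∑ v : V, ∑ w ∈ A, f v w := by
    calc Fintype.card V * k = ∑ _v : V, k := by simp [mul_comm]
    _ ≤ _ := Finset.sum_le_sum fun v _ => by rw [← hfilt]; exact h1 v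
  have hT3 : B.card * k ≤ ∑ v ∈ B, ∑ w ∈ A, f v w := by
    calc B.card * k = ∑ _v ∈ B, k := by simp [mul_comm]
    _ ≤ _ := Finset.sum_le_sum fun v _ => by rw [← hfilt]; exact h1 v
  have hT2 : B.card * k ≤ ∑ v ∈ B, ∑ w ∈ B, f v w := by
    calc B.card * k = ∑ _v ∈ B, k := by simp [mul_comm]
    _ ≤ _ := Finset.sum_le_sum fun v hv => by rw [← hfilt]; exact h2 v hv
  -- split total sum
  have hsplit : ∑ v : V, ∑ w : V, f v w
      = ∑ v : V, ∑ w ∈ A, f v w + (∑ v ∈ A, ∑ w ∈ B, f v w + ∑ v ∈ B, ∑ w ∈ B, f v w) := by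
    have h1 : ∀ v : V, ∑ w : V, f v w = ∑ w ∈ A, f v w + ∑ w ∈ B, f v w := by
      intro v
      rw [hB, Finset.sum_add_sum_compl]
    rw [Finset.sum_congr rfl (fun v _ => h1 v), Finset.sum_add_distrib]
    congr 1
    rw [hB, Finset.sum_add_sum_compl]
  -- main nat inequality
  have hmain : Fintype.card V * k + 2 * (B.card * k) ≤ 2 * G.edgeSet.ncard := by
    rw [← hdeg, hsplit, hsym]
    omega
  have hAB : A.card + B.card = Fintype.card V := by
    rw [hB]
    exact Finset.card_add_card_compl A
  -- pass to reals
  have hk0 : (0:ℝ) < (k:ℝ) := by exact_mod_cast hk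
  rw [← hAcard]
  have hmainR : (Fintype.card V : ℝ) * k + 2 * (B.card * k) ≤ 2 * G.edgeSet.ncard := by
    exact_mod_cast hmain
  have hABR : (A.card : ℝ) + B.card = Fintype.card V := by exact_mod_cast hAB
  have hdiv : (Fintype.card V : ℝ)/2 + B.card ≤ (G.edgeSet.ncard : ℝ)/k := by
    rw [le_div_iff₀ hk0]
    nlinarith [hmainR]
  linarith [hABR, hdiv]
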